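/- arXiv:1601.04445 — 2 statements merged into one kernel-verified Lean document; each statement's English description precedes it below -/
import Mathlib

section
/- Let (a_k)_{k≥0}, (α_k)_{k≥1} be nonnegative reals with sup_k α_k ≤ q < 1, and suppose there is A ≥ 0 such that for every N ≥ 1: a_N ≤ A + Σ_{k=1}^{N} α_k·a_k. Then for every N ≥ 1: a_N ≤ (A/(1−q))·exp( (1/(1−q))·Σ_{k=1}^{N−1} α_k ). -/
namespace AGS

theorem discrete_gronwall (a : ℕ → ℝ) (α : ℕ → ℝ) (q A : ℝ)
    (ha : ∀ k, 0 ≤ a k) (hα : ∀ k, 0 ≤ α k)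
    (hq : ∀ k, 1 ≤ k → α k ≤ q) (hq1 : q < 1) (hA : 0 ≤ A)
    (hrec : ∀ N : ℕ, 1 ≤ N → a N ≤ A + ∑ k ∈ Finset.Icc 1 N, α k * a k) :
    ∀ N : ℕ, 1 ≤ N →
      a N ≤ (A / (1 - q)) * Real.exp ((1 / (1 - q)) * ∑ k ∈ Finset.Icc 1 (N - 1), α k) := by
  have h1q : (0:ℝ) < 1 - q := by linarith
  set c : ℝ := 1 / (1 - q) with hc
  have hc0 : 0 < c := by positivity
  set S : ℕ → ℝ := fun M => A * c + ∑ k ∈ Finset.Icc 1 M, c * α k * a k with hS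
  have hSnn : ∀ M, 0 ≤ S M := by
    intro M
    apply add_nonneg (by positivity)
    exact Finset.sum_nonneg fun k _ => by
      have := hα k; have := ha k; positivity
  -- key estimate: a (M+1) ≤ S M
  have key : ∀ M : ℕ, a (M + 1) ≤ S M := by
    intro M
    have h := hrec (M + 1) (by omega)
    have hsplit : ∑ k ∈ Finset.Icc 1 (M + 1), α k * a k
        = (∑ k ∈ Finset.Icc 1 M, α k * a k) + α (M + 1) * a (M + 1) :=
      Finset.sum_Icc_succ_top (by omega) _
    have habs : α (M + 1) * a (M + 1) ≤ q * a (M + 1) :=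
      mul_le_mul_of_nonneg_right (hq _ (by omega)) (ha _)
    have h2 : (1 - q) * a (M + 1) ≤ A + ∑ k ∈ Finset.Icc 1 M, α k * a k := by
      rw [hsplit] at h; nlinarith
    have h3 : a (M + 1) ≤ (A + ∑ k ∈ Finset.Icc 1 M, α k * a k) / (1 - q) := by
      rw [le_div_iff₀ h1q]; linarith [h2]
    calc a (M + 1) ≤ (A + ∑ k ∈ Finset.Icc 1 M, α k * a k) / (1 - q) := h3
      _ = S M := by
          simp only [hS, hc, div_eq_mul_inv, add_mul, Finset.sum_mul, one_mul]
          ring_nf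
  -- product bound by induction
  have prodb : ∀ M : ℕ, S M ≤ A * c * ∏ k ∈ Finset.Icc 1 M, (1 + c * α k) := by
    intro M
    induction M with
    | zero => simp [hS]
    | succ n ih =>
      have hSsucc : S (n + 1) = S n + c * α (n + 1) * a (n + 1) := by
        simp only [hS]
        rw [Finset.sum_Icc_succ_top (by omega : 1 ≤ n + 1)]
        ring
      have hstep : S (n + 1) ≤ S n * (1 + c * α (n + 1)) := by
        rw [hSsucc]
        have h1 : c * α (n + 1) * a (n + 1) ≤ c * α (n + 1) * S n := by
          apply mul_le_mul_of_nonneg_left (key n)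
          have := hα (n + 1); positivity
        nlinarith
      have hfac : (0:ℝ) ≤ 1 + c * α (n + 1) := by
        have := hα (n + 1); positivity
      calc S (n + 1) ≤ S n * (1 + c * α (n + 1)) := hstep
        _ ≤ (A * c * ∏ k ∈ Finset.Icc 1 n, (1 + c * α k)) * (1 + c * α (n + 1)) :=
            mul_le_mul_of_nonneg_right ih hfac
        _ = A * c * ∏ k ∈ Finset.Icc 1 (n + 1), (1 + c * α k) := by
            rw [Finset.prod_Icc_succ_top (by omega : 1 ≤ n + 1)]; ring
  -- product ≤ exp
  have prodexp : ∀ M : ℕ, (∏ k ∈ Finset.Icc 1 M, (1 + c * α k))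
      ≤ Real.exp (c * ∑ k ∈ Finset.Icc 1 M, α k) := by
    intro M
    rw [Finset.mul_sum, Real.exp_sum]
    apply Finset.prod_le_prod
    · intro k _; have := hα k; positivity
    · intro k _
      have := Real.add_one_le_exp (c * α k)
      linarith
  intro N hN
  obtain ⟨M, rfl⟩ : ∃ M, N = M + 1 := ⟨N - 1, by omega⟩
  have : a (M + 1) ≤ A * c * Real.exp (c * ∑ k ∈ Finset.Icc 1 M, α k) := by
    calc a (M + 1) ≤ S M := key M
      _ ≤ A * c * ∏ k ∈ Finset.Icc 1 M, (1 + c * α k) := prodb M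
      _ ≤ A * c * Real.exp (c * ∑ k ∈ Finset.Icc 1 M, α k) :=
          mul_le_mul_of_nonneg_left (prodexp M) (by positivity)
  simpa [hc, div_eq_mul_inv, Nat.add_sub_cancel, mul_comm] using this
end AGS
end

section
/- Let f : [0,∞) → ℝ be 1-periodic, bounded and measurable with ∫_0^1 f(s) ds = 0, and let λ ≤ 0. Then for all t > 0 and ω > 0: | ∫_0^t e^{2λr} f(ωr) dr | ≤ (C/ω)·(1 + |λ|t), where C depends only on sup|f|. -/
open MeasureTheory intervalIntegral

lemma avg_integrableOn_of_bound {g : ℝ → ℝ} (hg : Measurable g) {s : Set ℝ}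
    (hs : MeasurableSet s) (hμ : volume s < ⊤) {C : ℝ} (hb : ∀ x ∈ s, |g x| ≤ C) :
    IntegrableOn g s := by
  refine Integrable.mono' (g := fun _ => C) (integrableOn_const hμ.ne)
    hg.aestronglyMeasurable.restrict ?_
  exact (ae_restrict_iff' hs).2 (Filter.Eventually.of_forall hb)

lemma avg_intervalIntegrable_of_bound {g : ℝ → ℝ} (hg : Measurable g) {C : ℝ}
    (hb : ∀ x, |g x| ≤ C) (a b : ℝ) : IntervalIntegrable g volume a b :=
  ⟨avg_integrableOn_of_bound hg measurableSet_Ioc measure_Ioc_lt_top (fun x _ => hb x),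
   avg_integrableOn_of_bound hg measurableSet_Ioc measure_Ioc_lt_top (fun x _ => hb x)⟩

lemma avg_primitive_bound (f : ℝ → ℝ) (M : ℝ)
    (hmeas : Measurable f)
    (hper : ∀ s : ℝ, f (s + 1) = f s)
    (hbdd : ∀ s : ℝ, |f s| ≤ M)
    (hmean : (∫ s in (0 : ℝ)..1, f s) = 0) :
    ∀ x : ℝ, |∫ s in (0 : ℝ)..x, f s| ≤ M := by
  have hM : 0 ≤ M := le_trans (abs_nonneg _) (hbdd 0)
  have hint : ∀ a b : ℝ, IntervalIntegrable f volume a b :=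
    avg_intervalIntegrable_of_bound hmeas hbdd
  have hperf : Function.Periodic f 1 := hper
  set F : ℝ → ℝ := fun x => ∫ s in (0 : ℝ)..x, f s with hF
  have hFP : Function.Periodic F 1 := by
    intro x
    have h1 : (∫ s in x..(x + 1), f s) = ∫ s in (0:ℝ)..(0 + 1), f s :=
      hperf.intervalIntegral_add_eq x 0
    have h2 : F x + (∫ s in x..(x+1), f s) = F (x + 1) :=
      integral_add_adjacent_intervals (hint 0 x) (hint x (x+1))
    simp only [zero_add] at h1
    rw [h1, hmean, add_zero] at h2
    exact h2.symm
  intro x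
  have hfr : F x = F (Int.fract x) := by
    have := hFP.sub_int_mul_eq (x := x) (n := ⌊x⌋)
    rw [mul_one] at this
    exact (this).symm
  show |F x| ≤ M
  rw [hfr]
  have hb : |F (Int.fract x)| ≤ M * |Int.fract x - 0| := by
    have := intervalIntegral.norm_integral_le_of_norm_le_const
      (a := (0:ℝ)) (b := Int.fract x) (C := M) (f := f)
      (fun y _ => by simpa [Real.norm_eq_abs] using hbdd y)
    simpa [Real.norm_eq_abs] using this
  calc |F (Int.fract x)| ≤ M * |Int.fract x - 0| := hb
    _ ≤ M * 1 := by
        apply mul_le_mul_of_nonneg_left _ hM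
        rw [sub_zero, abs_of_nonneg (Int.fract_nonneg x)]
        exact le_of_lt (Int.fract_lt_one x)
    _ = M := mul_one M

lemma avg_swap {g h : ℝ → ℝ} {t Mg Mh : ℝ} (hg : Measurable g) (hh : Measurable h)
    (ht : 0 ≤ t) (hMg : 0 ≤ Mg) (hMh : 0 ≤ Mh)
    (hgb : ∀ x ∈ Set.Ioc (0:ℝ) t, |g x| ≤ Mg)
    (hhb : ∀ x ∈ Set.Ioc (0:ℝ) t, |h x| ≤ Mh) :
    (∫ r in (0:ℝ)..t, (∫ u in r..t, h u) * g r) =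
      ∫ u in (0:ℝ)..t, h u * ∫ r in (0:ℝ)..u, g r := by
  set μt := volume.restrict (Set.Ioc (0:ℝ) t) with hμt
  haveI : IsFiniteMeasure μt := ⟨by simpa [hμt] using measure_Ioc_lt_top⟩
  set g2 : ℝ × ℝ → ℝ := fun p => if p.1 < p.2 then h p.2 * g p.1 else 0 with hg2
  have hmeas2 : Measurable g2 :=
    Measurable.ite (measurableSet_lt measurable_fst measurable_snd)
      ((hh.comp measurable_snd).mul (hg.comp measurable_fst)) measurable_const
  have hint2 : Integrable g2 (μt.prod μt) := by
    refine Integrable.mono' (g := fun _ => Mh * Mg) (integrable_const _)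
      hmeas2.aestronglyMeasurable ?_
    rw [hμt, Measure.prod_restrict]
    refine (ae_restrict_iff' (measurableSet_Ioc.prod measurableSet_Ioc)).2
      (Filter.Eventually.of_forall ?_)
    rintro ⟨r, u⟩ ⟨hr, hu⟩
    simp only [hg2, Real.norm_eq_abs]
    split_ifs with hlt
    · rw [abs_mul]
      exact mul_le_mul (hhb u hu) (hgb r hr) (abs_nonneg _) hMh
    · simpa using mul_nonneg hMh hMg
  have hswap : (∫ r, ∫ u, g2 (r, u) ∂μt ∂μt) = ∫ u, ∫ r, g2 (r, u) ∂μt ∂μt :=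
    integral_integral_swap (f := fun r u => g2 (r, u)) hint2
  have hL : (∫ r in (0:ℝ)..t, (∫ u in r..t, h u) * g r) = ∫ r, ∫ u, g2 (r, u) ∂μt ∂μt := by
    rw [intervalIntegral.integral_of_le ht, hμt]
    refine setIntegral_congr_fun measurableSet_Ioc ?_
    intro r hr
    dsimp only
    have h1 : (∫ u in Set.Ioc (0:ℝ) t, g2 (r, u)) =
        ∫ u in Set.Ioc (0:ℝ) t, (Set.Ioi r).indicator (fun u => h u * g r) u := by
      refine setIntegral_congr_fun measurableSet_Ioc ?_
      intro u _
      simp only [hg2, Set.indicator_apply, Set.mem_Ioi]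
    rw [h1, setIntegral_indicator measurableSet_Ioi]
    have h2 : Set.Ioc (0:ℝ) t ∩ Set.Ioi r = Set.Ioc r t := by
      rw [Set.Ioc_inter_Ioi, max_eq_right hr.1.le]
    rw [h2, MeasureTheory.integral_mul_const, intervalIntegral.integral_of_le hr.2]
  have hR : (∫ u in (0:ℝ)..t, h u * ∫ r in (0:ℝ)..u, g r) = ∫ u, ∫ r, g2 (r, u) ∂μt ∂μt := by
    rw [intervalIntegral.integral_of_le ht, hμt]
    refine setIntegral_congr_fun measurableSet_Ioc ?_
    intro u hu
    dsimp only
    have h1 : (∫ r in Set.Ioc (0:ℝ) t, g2 (r, u)) =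
        ∫ r in Set.Ioc (0:ℝ) t, (Set.Iio u).indicator (fun r => h u * g r) r := by
      refine setIntegral_congr_fun measurableSet_Ioc ?_
      intro r _
      simp only [hg2, Set.indicator_apply, Set.mem_Iio]
    rw [h1, setIntegral_indicator measurableSet_Iio]
    have h2 : Set.Ioc (0:ℝ) t ∩ Set.Iio u = Set.Ioo 0 u := by
      ext r
      constructor
      · rintro ⟨⟨h1', _⟩, h3⟩; exact ⟨h1', h3⟩
      · rintro ⟨h1', h3⟩; exact ⟨⟨h1', h3.le.trans hu.2⟩, h3⟩
    rw [h2, MeasureTheory.integral_const_mul, ← integral_Ioc_eq_integral_Ioo,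
      intervalIntegral.integral_of_le hu.1.le]
  rw [hL, hR, hswap]

lemma avg_intervalIntegrable_of_bound_on {g : ℝ → ℝ} (hg : Measurable g) {a b C : ℝ}
    (hab : a ≤ b) (hb : ∀ x ∈ Set.Ioc a b, |g x| ≤ C) : IntervalIntegrable g volume a b :=
  ⟨avg_integrableOn_of_bound hg measurableSet_Ioc measure_Ioc_lt_top hb, by
    rw [Set.Ioc_eq_empty (not_lt.2 hab)]; exact integrableOn_empty⟩

theorem averaging_estimate_oscillating (f : ℝ → ℝ) (M : ℝ)
    (hmeas : Measurable f)
    (hper : ∀ s : ℝ, f (s + 1) = f s)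
    (hbdd : ∀ s : ℝ, |f s| ≤ M)
    (hmean : (∫ s in (0 : ℝ)..1, f s) = 0) :
    ∃ C : ℝ, 0 ≤ C ∧ ∀ lam : ℝ, lam ≤ 0 → ∀ t ω : ℝ, 0 < t → 0 < ω →
      |∫ r in (0 : ℝ)..t, Real.exp (2 * lam * r) * f (ω * r)| ≤
        C / ω * (1 + |lam| * t) := by
  have hM : 0 ≤ M := le_trans (abs_nonneg _) (hbdd 0)
  have hFbd := avg_primitive_bound f M hmeas hper hbdd hmean
  refine ⟨2 * M, by linarith, ?_⟩
  intro lam hlam t ω ht hω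
  set E : ℝ → ℝ := fun u => Real.exp (2 * lam * u) with hE
  set g : ℝ → ℝ := fun r => f (ω * r) with hgdef
  have hgmeas : Measurable g := hmeas.comp (measurable_const_mul ω)
  have hgb : ∀ r, |g r| ≤ M := fun r => hbdd _
  set G : ℝ → ℝ := fun u => ∫ r in (0:ℝ)..u, g r with hGdef
  have hGbd : ∀ u, |G u| ≤ M / ω := by
    intro u
    have h1 : (∫ r in (0:ℝ)..u, g r) = ω⁻¹ • ∫ s in (ω * 0)..(ω * u), f s :=
      intervalIntegral.integral_comp_mul_left f (ne_of_gt hω)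
    show |∫ r in (0:ℝ)..u, g r| ≤ M / ω
    rw [h1, mul_zero, smul_eq_mul, abs_mul, abs_of_nonneg (inv_nonneg.2 hω.le),
      div_eq_inv_mul]
    exact mul_le_mul_of_nonneg_left (hFbd (ω * u)) (inv_nonneg.2 hω.le)
  have hEcont : Continuous E := by
    rw [hE]; continuity
  have hEmeas : Measurable E := hEcont.measurable
  have hE1 : ∀ u ∈ Set.Ioc (0:ℝ) t, |E u| ≤ 1 := by
    intro u hu
    rw [hE, abs_of_pos (Real.exp_pos _), Real.exp_le_one_iff]
    have : 2 * lam ≤ 0 := by linarith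
    exact mul_nonpos_of_nonpos_of_nonneg this hu.1.le
  -- FTC: ∫_r^t 2λ E u du = E t - E r
  have hFTC : ∀ r : ℝ, (∫ u in r..t, 2 * lam * E u) = E t - E r := by
    intro r
    have hderiv : ∀ u ∈ Set.uIcc r t, HasDerivAt E (2 * lam * E u) u := by
      intro u _
      have h1 : HasDerivAt (fun u : ℝ => 2 * lam * u) (2 * lam) u := by
        simpa using (hasDerivAt_id u).const_mul (2 * lam)
      have h2 := h1.exp
      rw [hE]
      convert h2 using 1
      ring
    have hint : IntervalIntegrable (fun u => 2 * lam * E u) volume r t :=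
      (continuous_const.mul hEcont).intervalIntegrable r t
    exact intervalIntegral.integral_eq_sub_of_hasDerivAt hderiv hint
  -- key identity
  have hIdent : (∫ r in (0:ℝ)..t, E r * g r) =
      E t * G t - 2 * lam * ∫ u in (0:ℝ)..t, E u * G u := by
    have hsplit : ∀ r : ℝ, E r * g r = E t * g r - (E t - E r) * g r := by
      intro r; ring
    have hint1 : IntervalIntegrable (fun r => E t * g r) volume 0 t :=
      avg_intervalIntegrable_of_bound_on (measurable_const.mul hgmeas) ht.le
        (fun x _ => by
          rw [Pi.mul_apply, abs_mul]
          exact mul_le_mul_of_nonneg_left (hgb x) (abs_nonneg _))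
    have hint2 : IntervalIntegrable (fun r => (E t - E r) * g r) volume 0 t := by
      refine avg_intervalIntegrable_of_bound_on
        ((measurable_const.sub hEmeas).mul hgmeas) ht.le (C := 2 * M) ?_
      intro x hx
      rw [Pi.mul_apply, abs_mul]
      have h1 : |E t - E x| ≤ 2 := by
        have := hE1 t ⟨ht, le_refl t⟩
        have := hE1 x hx
        have := abs_sub (E t) (E x)
        calc |E t - E x| ≤ |E t| + |E x| := abs_sub _ _
          _ ≤ 2 := by linarith
      exact mul_le_mul h1 (hgb x) (abs_nonneg _) (by norm_num)
    have e1 : (∫ r in (0:ℝ)..t, E r * g r) =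
        (∫ r in (0:ℝ)..t, E t * g r) - ∫ r in (0:ℝ)..t, (E t - E r) * g r := by
      rw [← intervalIntegral.integral_sub hint1 hint2]
      exact intervalIntegral.integral_congr (fun r _ => hsplit r)
    have e2 : (∫ r in (0:ℝ)..t, E t * g r) = E t * G t := by
      rw [intervalIntegral.integral_const_mul, hGdef]
    have e3 : (∫ r in (0:ℝ)..t, (E t - E r) * g r) =
        2 * lam * ∫ u in (0:ℝ)..t, E u * G u := by
      have c1 : (∫ r in (0:ℝ)..t, (E t - E r) * g r) =
          ∫ r in (0:ℝ)..t, 2 * lam * ((∫ u in r..t, E u) * g r) := by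
        refine intervalIntegral.integral_congr (fun r _ => ?_)
        have := hFTC r
        rw [intervalIntegral.integral_const_mul] at this
        rw [← this]; ring
      rw [c1, intervalIntegral.integral_const_mul]
      congr 1
      exact avg_swap hgmeas hEmeas ht.le hM zero_le_one
        (fun x _ => hgb x) hE1
    rw [e1, e2, e3]
  -- final bound
  have hb1 : |E t * G t| ≤ M / ω := by
    rw [abs_mul]
    calc |E t| * |G t| ≤ 1 * (M / ω) :=
      mul_le_mul (hE1 t ⟨ht, le_refl t⟩) (hGbd t) (abs_nonneg _) zero_le_one
      _ = M / ω := one_mul _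
  have hb2 : |∫ u in (0:ℝ)..t, E u * G u| ≤ M / ω * t := by
    have hbd : ∀ x ∈ Set.uIoc (0:ℝ) t, ‖E x * G x‖ ≤ M / ω := by
      intro x hx
      rw [Set.uIoc_of_le ht.le] at hx
      rw [Real.norm_eq_abs, abs_mul]
      calc |E x| * |G x| ≤ 1 * (M / ω) :=
            mul_le_mul (hE1 x hx) (hGbd x) (abs_nonneg _) zero_le_one
        _ = M / ω := one_mul _
    have := intervalIntegral.norm_integral_le_of_norm_le_const hbd
    rw [Real.norm_eq_abs, sub_zero, abs_of_pos ht] at this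
    exact this
  have hMω : 0 ≤ M / ω := div_nonneg hM hω.le
  calc |∫ r in (0:ℝ)..t, Real.exp (2 * lam * r) * f (ω * r)|
      = |E t * G t - 2 * lam * ∫ u in (0:ℝ)..t, E u * G u| := by rw [← hIdent]
    _ ≤ |E t * G t| + |2 * lam * ∫ u in (0:ℝ)..t, E u * G u| := abs_sub _ _
    _ ≤ M / ω + 2 * |lam| * (M / ω * t) := by
        refine add_le_add hb1 ?_
        rw [abs_mul]
        have h2l : |2 * lam| = 2 * |lam| := by
          rw [abs_mul, abs_of_pos (by norm_num : (0:ℝ) < 2)]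
        rw [h2l]
        exact mul_le_mul_of_nonneg_left hb2 (by positivity)
    _ ≤ 2 * M / ω * (1 + |lam| * t) := by
        have h1 : 2 * M / ω * (1 + |lam| * t) = 2 * (M / ω) + 2 * (M / ω) * (|lam| * t) := by
          ring
        nlinarith [abs_nonneg lam, ht.le, hMω]
end
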